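/- Let ρ_d > 0, ω > 0, b ∈ ℝ, let α : [0,1] → (0, ∞) be continuous, and let λ ∈ ℝ satisfy the eigenvalue relation ρ_d·(λ/ω + 1) = ∫₀¹ α(s)·exp( (1/ρ_d)·∫₀ˢ (b − α(σ) − λ) dσ ) ds with λ + ω > 0. Fix φ(0) > 0, set Ψ = ω·φ(0)/(λ + ω), J(x) = ∫₀ˣ α(s)·exp( (1/ρ_d)·∫₀ˢ (b − α(σ) − λ) dσ ) ds, and define φ(x) = φ(0)·exp( −(1/ρ_d)·∫₀ˣ (b − α(s) − λ) ds )·(1 − J(x)/J(1)). Then φ solves the adjoint eigenvalue problem: −ρ_d φ'(x) = (b − λ − α(x))·φ(x) + α(x)·Ψ for all x ∈ [0,1], with (λ + ω)Ψ = ω φ(0) and φ(1) = 0. -/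

import Mathlib

open Real Set

/-- `J(x) = ∫₀ˣ α(s) exp((1/ρ) ∫₀ˢ (b − α(σ) − λ) dσ) ds`. -/
noncomputable def Jfun (ρ b lam : ℝ) (α : ℝ → ℝ) (x : ℝ) : ℝ :=
  ∫ s in (0 : ℝ)..x,
    α s * Real.exp ((1 / ρ) * ∫ σ in (0 : ℝ)..s, (b - α σ - lam))

/-- The explicit adjoint eigenfunction
`φ(x) = φ₀ exp(−(1/ρ) ∫₀ˣ (b − α(s) − λ) ds) (1 − J(x)/J(1))`. -/
noncomputable def adjointPhi (ρ b lam φ0 : ℝ) (α : ℝ → ℝ) (x : ℝ) : ℝ :=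
  φ0 * Real.exp (-(1 / ρ) * ∫ s in (0 : ℝ)..x, (b - α s - lam)) *
    (1 - Jfun ρ b lam α x / Jfun ρ b lam α 1)

/-- Auxiliary algebraic identity. -/
lemma stmt9_alg (ρ ω lam b a φ0 E K J : ℝ) (hρ : ρ ≠ 0) (hω : ω ≠ 0)
    (hlw : lam + ω ≠ 0) (hEK : E * K = 1) :
    -(1/ρ) * ((b - lam - a) * (φ0 * E * (1 - J / (ρ * (lam + ω) / ω))) +
      a * (ω * φ0 / (lam + ω))) =
    φ0 * (E * (-(1/ρ) * (b - a - lam))) * (1 - J / (ρ * (lam + ω) / ω)) +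
      φ0 * E * -(a * K / (ρ * (lam + ω) / ω)) := by
  have h1 : ρ * (lam + ω) / ω ≠ 0 := div_ne_zero (mul_ne_zero hρ hlw) hω
  field_simp
  linear_combination (a * ω * φ0 * ρ) * hEK

/-- Let `ρ > 0`, `ω > 0`, `b ∈ ℝ`, `α : [0,1] → (0,∞)` continuous, and
let `λ ∈ ℝ` satisfy the eigenvalue relation with `λ + ω > 0`.  Fix `φ₀ > 0` and set
`Ψ = ω φ₀ / (λ + ω)`.  Then `φ` defined by the explicit formula solves the adjoint
eigenvalue problem: `−ρ φ'(x) = (b − λ − α(x)) φ(x) + α(x) Ψ` on `[0,1]`, with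
`(λ + ω) Ψ = ω φ(0)` and `φ(1) = 0`. -/
theorem stmt9 (ρ ω b : ℝ) (hρ : 0 < ρ) (hω : 0 < ω) (α : ℝ → ℝ)
    (hαc : ContinuousOn α (Set.Icc 0 1))
    (hαpos : ∀ x ∈ Set.Icc (0 : ℝ) 1, 0 < α x)
    (lam : ℝ) (hlamω : 0 < lam + ω)
    (hrel : ρ * (lam / ω + 1) =
      ∫ s in (0 : ℝ)..1,
        α s * Real.exp ((1 / ρ) * ∫ σ in (0 : ℝ)..s, (b - α σ - lam)))
    (φ0 : ℝ) (hφ0 : 0 < φ0) :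
    (∀ x ∈ Set.Icc (0 : ℝ) 1,
      HasDerivWithinAt (adjointPhi ρ b lam φ0 α)
        (-(1 / ρ) * ((b - lam - α x) * adjointPhi ρ b lam φ0 α x +
          α x * (ω * φ0 / (lam + ω))))
        (Set.Icc 0 1) x) ∧
    (lam + ω) * (ω * φ0 / (lam + ω)) = ω * adjointPhi ρ b lam φ0 α 0 ∧
    adjointPhi ρ b lam φ0 α 1 = 0 := by
  have hJ1 : Jfun ρ b lam α 1 = ρ * (lam + ω) / ω := by
    unfold Jfun
    rw [← hrel]; field_simp
  have hJ1pos : 0 < Jfun ρ b lam α 1 := by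
    rw [hJ1]; positivity
  set g : ℝ → ℝ := fun σ => b - α σ - lam with hg
  have hgc : ContinuousOn g (Icc 0 1) :=
    (continuousOn_const.sub hαc).sub continuousOn_const
  set F : ℝ → ℝ := fun x => ∫ σ in (0:ℝ)..x, g σ with hF
  have hFderiv : ∀ x ∈ Icc (0:ℝ) 1, HasDerivWithinAt F (g x) (Icc 0 1) x := by
    intro x hx
    haveI : Fact (x ∈ Icc (0:ℝ) 1) := ⟨hx⟩
    exact intervalIntegral.integral_hasDerivWithinAt_right
      ((hgc.mono (by rw [Set.uIcc_of_le hx.1]; exact Icc_subset_Icc le_rfl hx.2)).intervalIntegrable)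
      (hgc.stronglyMeasurableAtFilter_nhdsWithin measurableSet_Icc x)
      (hgc x hx)
  have hFc : ContinuousOn F (Icc 0 1) := fun x hx => (hFderiv x hx).continuousWithinAt
  set h : ℝ → ℝ := fun s => α s * Real.exp ((1/ρ) * F s) with hh
  have hhc : ContinuousOn h (Icc 0 1) :=
    hαc.mul (Real.continuous_exp.comp_continuousOn (continuousOn_const.mul hFc))
  have hJeq : Jfun ρ b lam α = fun x => ∫ s in (0:ℝ)..x, h s := rfl
  have hJderiv : ∀ x ∈ Icc (0:ℝ) 1,
      HasDerivWithinAt (Jfun ρ b lam α) (h x) (Icc 0 1) x := by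
    intro x hx
    haveI : Fact (x ∈ Icc (0:ℝ) 1) := ⟨hx⟩
    rw [hJeq]
    exact intervalIntegral.integral_hasDerivWithinAt_right
      ((hhc.mono (by rw [Set.uIcc_of_le hx.1]; exact Icc_subset_Icc le_rfl hx.2)).intervalIntegrable)
      (hhc.stronglyMeasurableAtFilter_nhdsWithin measurableSet_Icc x)
      (hhc x hx)
  have hphi : adjointPhi ρ b lam φ0 α =
      fun x => φ0 * Real.exp (-(1/ρ) * F x) * (1 - Jfun ρ b lam α x / Jfun ρ b lam α 1) := rfl
  refine ⟨?_, ?_, ?_⟩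
  · intro x hx
    have hE : HasDerivWithinAt (fun y => Real.exp (-(1/ρ) * F y))
        (Real.exp (-(1/ρ) * F x) * (-(1/ρ) * g x)) (Icc 0 1) x :=
      ((hFderiv x hx).const_mul (-(1/ρ))).exp
    have hS : HasDerivWithinAt (fun y => 1 - Jfun ρ b lam α y / Jfun ρ b lam α 1)
        (-(h x / Jfun ρ b lam α 1)) (Icc 0 1) x :=
      ((hJderiv x hx).div_const _).const_sub 1
    have total := (hE.const_mul φ0).mul hS
    rw [hphi]
    refine total.congr_deriv ?_
    symm
    have hexp : Real.exp (-(1/ρ) * F x) * Real.exp ((1/ρ) * F x) = 1 := by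
      rw [← Real.exp_add, neg_mul, neg_add_cancel, Real.exp_zero]
    rw [hJ1]
    exact stmt9_alg ρ ω lam b (α x) φ0 (Real.exp (-(1/ρ) * F x))
      (Real.exp ((1/ρ) * F x)) (Jfun ρ b lam α x) hρ.ne' hω.ne' hlamω.ne' hexp
  · have h0 : adjointPhi ρ b lam φ0 α 0 = φ0 := by
      simp [adjointPhi, Jfun, intervalIntegral.integral_same]
    rw [h0]
    field_simp
  · have hd : Jfun ρ b lam α 1 / Jfun ρ b lam α 1 = 1 := div_self hJ1pos.ne'
    simp [adjointPhi, hd]
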